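/- Every first-countable Hausdorff topological monoid with open shifts is submetrizable: if S is a topological monoid with open shifts whose topology is Hausdorff (T2) and first countable, then there exists a metric space structure on S whose induced topology is coarser than the topology of S. -/

import Mathlib

open Topology

/-- Auxiliary: a separated, countably generated uniform structure yields a metric
whose topology is the uniform topology. -/
theorem exists_metric_of_uniform_aux {X : Type*} (U : UniformSpace X)
    (hcg : (@uniformity X U).IsCountablyGenerated)
    (hsep : ∀ x y : X, (∀ r ∈ @uniformity X U, (x, y) ∈ r) → x = y) :
    ∃ m : MetricSpace X, m.toUniformSpace.toTopologicalSpace = U.toTopologicalSpace := by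
  letI := U
  haveI := hcg
  haveI ht0 : T0Space X := t0Space_iff_uniformity.2 hsep
  obtain ⟨I, hI⟩ := UniformSpace.metrizable_uniformity X
  have ht0' : @T0Space X I.toUniformSpace.toTopologicalSpace := by
    rw [hI]; exact ht0
  refine ⟨@MetricSpace.ofT0PseudoMetricSpace X I ht0', ?_⟩
  have : (@MetricSpace.ofT0PseudoMetricSpace X I ht0').toUniformSpace = I.toUniformSpace := rfl
  rw [this, hI]

/-- Corollary `last` for monoids. Every first-countable
Hausdorff topological monoid with open shifts is submetrizable: there is a
metric on `S` whose induced topology is coarser than the topology of `S`. -/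
theorem submetrizable_of_firstCountable_t2_monoid {S : Type*} [Monoid S]
    [TopologicalSpace S] [ContinuousMul S] [T2Space S]
    [FirstCountableTopology S]
    (hshift : ∀ a b : S, IsOpenMap fun x : S => a * x * b) :
    ∃ m : MetricSpace S,
      ∀ t : Set S, IsOpen[m.toUniformSpace.toTopologicalSpace] t → IsOpen t := by
  classical
  -- an antitone countable basis of neighborhoods of `1`
  obtain ⟨u, hu⟩ := (𝓝 (1 : S)).exists_antitone_basis
  -- for every neighborhood of `1` there is a smaller one whose square is inside it
  have hsq : ∀ V : Set S, ∃ W : Set S, W ∈ 𝓝 (1 : S) ∧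
      (V ∈ 𝓝 (1 : S) → ∀ x ∈ W, ∀ y ∈ W, x * y ∈ V) := by
    intro V
    by_cases hV : V ∈ 𝓝 (1 : S)
    · have hc : Filter.Tendsto (fun p : S × S => p.1 * p.2) (𝓝 ((1 : S), (1 : S)))
          (𝓝 (1 : S)) := by
        simpa using continuous_mul.tendsto ((1 : S), (1 : S))
      have hpre := hc hV
      rw [nhds_prod_eq] at hpre
      obtain ⟨W₁, hW₁, W₂, hW₂, hsub⟩ := Filter.mem_prod_iff.1 hpre
      refine ⟨W₁ ∩ W₂, Filter.inter_mem hW₁ hW₂, fun _ x hx y hy => ?_⟩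
      exact hsub (Set.mk_mem_prod hx.1 hy.2)
    · exact ⟨Set.univ, Filter.univ_mem, fun h => absurd h hV⟩
  choose g hg1 hg2 using hsq
  -- recursively defined basic neighborhoods
  set V : ℕ → Set S := fun n => Nat.rec (u 0) (fun n Vn => u (n + 1) ∩ g Vn ∩ Vn) n with hVdef
  have hVs : ∀ n, V (n + 1) = u (n + 1) ∩ g (V n) ∩ V n := fun n => rfl
  have hVmem : ∀ n, V n ∈ 𝓝 (1 : S) := by
    intro n
    induction n with
    | zero => exact hu.mem 0
    | succ n ih =>
        rw [hVs]
        exact Filter.inter_mem (Filter.inter_mem (hu.mem _) (hg1 _)) ih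
  have hVone : ∀ n, (1 : S) ∈ V n := fun n => mem_of_mem_nhds (hVmem n)
  have hVu : ∀ n, V n ⊆ u n := by
    intro n
    cases n with
    | zero => exact subset_rfl
    | succ n => rw [hVs]; exact fun x hx => hx.1.1
  have hVanti : Antitone V := by
    refine antitone_nat_of_succ_le fun n => ?_
    rw [hVs]
    exact fun x hx => hx.2
  have hVmul : ∀ n, ∀ x ∈ V (n + 1), ∀ y ∈ V (n + 1), x * y ∈ V n := by
    intro n x hx y hy
    have hx' : x ∈ g (V n) := ((hVs n ▸ hx : x ∈ u (n + 1) ∩ g (V n) ∩ V n)).1.2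
    have hy' : y ∈ g (V n) := ((hVs n ▸ hy : y ∈ u (n + 1) ∩ g (V n) ∩ V n)).1.2
    exact hg2 (V n) (hVmem n) x hx' y hy'
  -- the entourages
  set D : ℕ → Set (S × S) := fun n =>
    {p | (∃ a ∈ V n, ∃ b ∈ V n, p.2 * b = a * p.1) ∧
         (∃ a ∈ V n, ∃ b ∈ V n, p.1 * b = a * p.2)} with hDdef
  have hDrefl : ∀ n (x : S), (x, x) ∈ D n := by
    intro n x
    exact ⟨⟨1, hVone n, 1, hVone n, by simp⟩, ⟨1, hVone n, 1, hVone n, by simp⟩⟩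
  have hDsymm : ∀ n (p : S × S), p ∈ D n → (p.2, p.1) ∈ D n := by
    intro n p hp
    exact ⟨hp.2, hp.1⟩
  have hDanti : Antitone D := by
    intro m n hmn p hp
    obtain ⟨⟨a, ha, b, hb, hab⟩, ⟨c, hc, d, hd, hcd⟩⟩ := hp
    exact ⟨⟨a, hVanti hmn ha, b, hVanti hmn hb, hab⟩,
      ⟨c, hVanti hmn hc, d, hVanti hmn hd, hcd⟩⟩
  have hDcomp : ∀ n (x y z : S), (x, y) ∈ D (n + 1) → (y, z) ∈ D (n + 1) → (x, z) ∈ D n := by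
    intro n x y z hxy hyz
    obtain ⟨⟨a, ha, b, hb, hab⟩, ⟨c, hc, d, hd, hcd⟩⟩ := hxy
    obtain ⟨⟨a', ha', b', hb', hab'⟩, ⟨c', hc', d', hd', hcd'⟩⟩ := hyz
    constructor
    · refine ⟨a' * a, hVmul n a' ha' a ha, b' * b, hVmul n b' hb' b hb, ?_⟩
      calc z * (b' * b) = z * b' * b := (mul_assoc _ _ _).symm
        _ = a' * y * b := by rw [hab']
        _ = a' * (y * b) := mul_assoc _ _ _
        _ = a' * (a * x) := by rw [hab]
        _ = a' * a * x := (mul_assoc _ _ _).symm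
    · refine ⟨c * c', hVmul n c hc c' hc', d * d', hVmul n d hd d' hd', ?_⟩
      calc x * (d * d') = x * d * d' := (mul_assoc _ _ _).symm
        _ = c * y * d' := by rw [hcd]
        _ = c * (y * d') := mul_assoc _ _ _
        _ = c * (c' * z) := by rw [hcd']
        _ = c * c' * z := (mul_assoc _ _ _).symm
  -- the filter generated by the entourages
  set F : Filter (S × S) := ⨅ n, Filter.principal (D n) with hFdef
  have hFbasis : F.HasAntitoneBasis D := Filter.HasAntitoneBasis.iInf_principal hDanti
  have hFmem : ∀ n, D n ∈ F := fun n => hFbasis.mem n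
  -- the uniform structure
  have hswap : ∀ n, Prod.swap ⁻¹' (D n) = D n := by
    intro n
    ext p
    constructor
    · intro hp
      exact hDsymm n p.swap hp
    · intro hp
      exact hDsymm n p hp
  let core : UniformSpace.Core S :=
    { uniformity := F
      refl := by
        refine le_iInf fun n => ?_
        rw [Filter.le_principal_iff, Filter.mem_principal]
        rintro ⟨x, y⟩ h
        rw [SetRel.mem_id] at h
        subst h
        exact hDrefl n x
      symm := by
        refine le_iInf fun n => ?_
        rw [Filter.le_principal_iff, Filter.mem_map, hswap n]
        exact hFmem n
      comp := by
        refine le_iInf fun n => ?_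
        rw [Filter.le_principal_iff]
        refine Filter.mem_of_superset (Filter.mem_lift' (hFmem (n + 1))) ?_
        rintro ⟨x, z⟩ ⟨y, h1, h2⟩
        exact hDcomp n x y z h1 h2 }
  let U : UniformSpace S := UniformSpace.ofCore core
  have hUuni : @uniformity S U = F := rfl
  -- countably generated
  have hcg : (@uniformity S U).IsCountablyGenerated := by
    rw [hUuni]
    exact hFbasis.toHasBasis.isCountablyGenerated
  -- separated, thanks to Hausdorffness of `S`
  have hsep : ∀ x y : S, (∀ r ∈ @uniformity S U, (x, y) ∈ r) → x = y := by
    intro x y h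
    have hD : ∀ n, (x, y) ∈ D n := fun n => h (D n) (hFmem n)
    choose a ha b hb heq using fun n => (hD n).1
    have hta : Filter.Tendsto a Filter.atTop (𝓝 (1 : S)) :=
      hu.tendsto fun n => hVu n (ha n)
    have htb : Filter.Tendsto b Filter.atTop (𝓝 (1 : S)) :=
      hu.tendsto fun n => hVu n (hb n)
    have h1 : Filter.Tendsto (fun n => a n * x) Filter.atTop (𝓝 (1 * x)) :=
      hta.mul tendsto_const_nhds
    have h2 : Filter.Tendsto (fun n => y * b n) Filter.atTop (𝓝 (y * 1)) :=
      tendsto_const_nhds.mul htb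
    have h3 : (fun n => y * b n) = fun n => a n * x := funext heq
    rw [h3] at h2
    have := tendsto_nhds_unique h2 h1
    rw [mul_one, one_mul] at this
    exact this.symm
  -- the uniform topology is coarser than the topology of `S`
  have hco : ∀ s : Set S, IsOpen[U.toTopologicalSpace] s → IsOpen s := by
    intro s hs
    rw [isOpen_iff_mem_nhds]
    intro x hx
    obtain ⟨W, hW, hWs⟩ := (@isOpen_iff_ball_subset S U s).1 hs x hx
    rw [hUuni] at hW
    obtain ⟨n, -, hn⟩ := hFbasis.toHasBasis.mem_iff.1 hW
    have hball : {y : S | (x, y) ∈ D n} ⊆ s := fun y hy => hWs (hn hy)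
    have hone : (1 : S) ∈ interior (V n) := mem_interior_iff_mem_nhds.2 (hVmem n)
    have hA : IsOpen ((fun z : S => (1 : S) * z * x) '' interior (V n)) :=
      (hshift 1 x) _ isOpen_interior
    have hB : IsOpen ((fun z : S => x * z * (1 : S)) '' interior (V n)) :=
      (hshift x 1) _ isOpen_interior
    have hxmem : x ∈ ((fun z : S => (1 : S) * z * x) '' interior (V n)) ∩
        ((fun z : S => x * z * (1 : S)) '' interior (V n)) := by
      constructor
      · exact ⟨1, hone, by simp⟩
      · exact ⟨1, hone, by simp⟩
    refine Filter.mem_of_superset (((hA.inter hB).mem_nhds hxmem)) ?_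
    rintro y ⟨⟨p, hp, hpy⟩, ⟨q, hq, hqy⟩⟩
    apply hball
    refine ⟨⟨p, interior_subset hp, 1, hVone n, ?_⟩, ⟨1, hVone n, q, interior_subset hq, ?_⟩⟩
    · simp only [← hpy]
      simp
    · simp only [← hqy]
      simp
  -- conclude using metrization of uniform spaces
  obtain ⟨m, hm⟩ := exists_metric_of_uniform_aux U hcg hsep
  exact ⟨m, fun t ht => hco t (by rwa [hm] at ht)⟩
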